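/- For a real random variable X with mean μ and variance σ², E[(X - q)⁺] ≤ (μ - q + sqrt((μ - q)² + σ²)) / 2, where (x)⁺ = max(x, 0). -/

import Mathlib

open MeasureTheory ProbabilityTheory Real

/-- Scarf's bound: `E[(X - q)⁺] ≤ (μ - q + sqrt((μ - q)² + σ²)) / 2`. -/
theorem scarf_bound {Ω : Type*} [MeasureSpace Ω]
    [IsProbabilityMeasure (ℙ : Measure Ω)]
    (X : Ω → ℝ) (μ σ q : ℝ)
    (hmeas : Measurable X) (hL2 : MemLp X 2 ℙ)
    (hmean : ∫ ω, X ω ∂ℙ = μ)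
    (hvar : variance X ℙ = σ ^ 2) :
    ∫ ω, max (X ω - q) 0 ∂ℙ ≤ (μ - q + Real.sqrt ((μ - q) ^ 2 + σ ^ 2)) / 2 := by
  have h1 : MemLp (fun ω => X ω - q) 2 ℙ := hL2.sub (memLp_const q)
  have habs : MemLp (fun ω => |X ω - q|) 2 ℙ := by
    simpa [Real.norm_eq_abs] using h1.norm
  have hint1 : Integrable (fun ω => X ω - q) ℙ := h1.integrable one_le_two
  have hintabs : Integrable (fun ω => |X ω - q|) ℙ := hint1.abs
  have hintX : Integrable X ℙ := hL2.integrable one_le_two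
  have hintX2 : Integrable (fun ω => X ω ^ 2) ℙ := hL2.integrable_sq
  have hintsq : Integrable (fun ω => (X ω - q) ^ 2) ℙ := h1.integrable_sq
  -- E[X^2] = σ² + μ²
  have hX2 : ∫ ω, X ω ^ 2 ∂ℙ = σ ^ 2 + μ ^ 2 := by
    have := variance_eq_sub hL2
    rw [hvar] at this
    have h2 : (∫ ω, (X ^ 2) ω ∂ℙ) = ∫ ω, X ω ^ 2 ∂ℙ := by simp [Pi.pow_apply]
    rw [h2] at this
    rw [hmean] at this
    linarith
  have hEsq : ∫ ω, (X ω - q) ^ 2 ∂ℙ = (μ - q) ^ 2 + σ ^ 2 := by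
    have heq : (fun ω => (X ω - q) ^ 2) = fun ω => (X ω ^ 2 - (2 * q) * X ω) + q ^ 2 := by
      funext ω; ring
    have hi : Integrable (fun ω => X ω ^ 2 - 2 * q * X ω) ℙ := hintX2.sub (hintX.const_mul _)
    rw [heq, integral_add hi (integrable_const _),
      integral_sub hintX2 (hintX.const_mul _), MeasureTheory.integral_const_mul, hmean, hX2]
    simp; ring
  have hEabs : ∫ ω, |X ω - q| ∂ℙ ≤ Real.sqrt ((μ - q) ^ 2 + σ ^ 2) := by
    have hv := variance_nonneg (fun ω => |X ω - q|) ℙ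
    rw [variance_eq_sub habs] at hv
    have h2 : (∫ ω, ((fun ω => |X ω - q|) ^ 2) ω ∂ℙ) = ∫ ω, (X ω - q) ^ 2 ∂ℙ := by
      simp [sq_abs]
    rw [h2, hEsq] at hv
    have hnn : 0 ≤ ∫ ω, |X ω - q| ∂ℙ := integral_nonneg fun ω => abs_nonneg _
    rw [Real.le_sqrt hnn (by positivity)]
    linarith
  have hmax : (fun ω => max (X ω - q) 0) = fun ω => ((X ω - q) + |X ω - q|) / 2 := by
    funext ω
    rcases le_total 0 (X ω - q) with h | h
    · rw [max_eq_left h, abs_of_nonneg h]; ring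
    · rw [max_eq_right h, abs_of_nonpos h]; ring
  rw [hmax]
  rw [integral_div, integral_add hint1 hintabs, integral_sub hintX (integrable_const _), hmean]
  simp only [integral_const, probReal_univ, ENNReal.toReal_one, smul_eq_mul, one_mul]
  linarith
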